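/- Let Δt, ν, C_p, μ, C_w, C_q be positive real numbers with μ > C_w, and set α := (1 + ν·C_p^{-2}·Δt + (μ/2)·Δt)/(1 + (C_w/2)·Δt) and B := ((C_w·ν^{-1} + C_q)/(1 + (C_w/2)·Δt))·Δt³. Let (a_n)_{n≥0} be a sequence of nonnegative real numbers with a_0 = 0 satisfying α·a_{n+1} ≤ a_n + B for every n ≥ 0. Then for every n ≥ 0, a_n ≤ ((C_w·ν^{-1} + C_q)/(ν·C_p^{-2}))·Δt², and hence √(a_n) ≤ √((C_w·ν^{-1} + C_q)/(ν·C_p^{-2}))·Δt. -/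

import Mathlib

/-- Algebraic core of the long-time first-order convergence proof for the
CDA-Projection method (Theorem 3.1). -/
theorem cda_projection_error_recursion
    (Δt ν C_p μ C_w C_q : ℝ)
    (hΔt : 0 < Δt) (hν : 0 < ν) (hCp : 0 < C_p) (hμ : 0 < μ)
    (hCw : 0 < C_w) (hCq : 0 < C_q) (hμCw : C_w < μ)
    (α B : ℝ)
    (hα : α = (1 + ν * (C_p ^ 2)⁻¹ * Δt + (μ / 2) * Δt) / (1 + (C_w / 2) * Δt))
    (hB : B = ((C_w * ν⁻¹ + C_q) / (1 + (C_w / 2) * Δt)) * Δt ^ 3)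
    (a : ℕ → ℝ) (ha : ∀ n : ℕ, 0 ≤ a n) (ha0 : a 0 = 0)
    (hrec : ∀ n : ℕ, α * a (n + 1) ≤ a n + B) :
    ∀ n : ℕ,
      a n ≤ ((C_w * ν⁻¹ + C_q) / (ν * (C_p ^ 2)⁻¹)) * Δt ^ 2 ∧
        Real.sqrt (a n) ≤ Real.sqrt ((C_w * ν⁻¹ + C_q) / (ν * (C_p ^ 2)⁻¹)) * Δt := by
  have hc : 0 < ν * (C_p ^ 2)⁻¹ := by positivity
  have hD : 0 < 1 + (C_w / 2) * Δt := by positivity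
  have hK : 0 < C_w * ν⁻¹ + C_q := by positivity
  set M := ((C_w * ν⁻¹ + C_q) / (ν * (C_p ^ 2)⁻¹)) * Δt ^ 2 with hM
  have hMpos : 0 < M := by positivity
  have hα1 : (1 : ℝ) < α := by
    rw [hα, lt_div_iff₀ hD]
    nlinarith [mul_pos hc hΔt]
  have hαpos : 0 < α := lt_trans one_pos hα1
  have hMν : M * (ν * (C_p ^ 2)⁻¹) = (C_w * ν⁻¹ + C_q) * Δt ^ 2 := by
    rw [hM]; field_simp
  have key : M + B ≤ α * M := by
    rw [← mul_le_mul_iff_of_pos_right hD]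
    have e1 : α * M * (1 + (C_w / 2) * Δt)
        = (1 + ν * (C_p ^ 2)⁻¹ * Δt + (μ / 2) * Δt) * M := by
      rw [hα]; field_simp
    have e2 : B * (1 + (C_w / 2) * Δt) = (C_w * ν⁻¹ + C_q) * Δt ^ 3 := by
      rw [hB]; field_simp
    have hμM : 0 ≤ (μ - C_w) * Δt * M :=
      mul_nonneg (mul_nonneg (sub_pos.mpr hμCw).le hΔt.le) hMpos.le
    nlinarith [hMν, mul_pos hΔt hMpos]
  have hbound : ∀ n : ℕ, a n ≤ M := by
    intro n
    induction n with
    | zero => rw [ha0]; exact hMpos.le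
    | succ n ih =>
      have h1 : α * a (n + 1) ≤ α * M := le_trans (hrec n) (le_trans (by linarith) key)
      exact le_of_mul_le_mul_left h1 hαpos
  intro n
  refine ⟨hbound n, ?_⟩
  calc Real.sqrt (a n) ≤ Real.sqrt M := Real.sqrt_le_sqrt (hbound n)
    _ = Real.sqrt ((C_w * ν⁻¹ + C_q) / (ν * (C_p ^ 2)⁻¹)) * Δt := by
        rw [hM, Real.sqrt_mul (by positivity), Real.sqrt_sq hΔt.le]
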